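/- Let n be a power of two, B a power of two dividing n, X ∈ ℂ^n, and G ∈ ℂ^n symmetric about zero (G_{−t} = G_t for all t ∈ [n]). Let σ ∈ [n] be odd and Δ ∈ [n], and let U ∈ ℂ^B be the (n,B,G,σ,Δ)-hashing of X. Then the Fourier transform of U satisfies, for every b ∈ [B]: Û_b = Σ_{f∈[n]} X̂_f · Ĝ_{σf − b·(n/B)} · ω_n^{σΔf}. -/

import Mathlib

open Finset

/-- Discrete Fourier transform of a length-`n` signal, with `1/n` normalization:
`X̂_f = (1/n) ∑_t X_t ω_n^{-ft}`. -/
noncomputable def dft (n : ℕ) [NeZero n] (X : ZMod n → ℂ) : ZMod n → ℂ :=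
  fun f => (n : ℂ)⁻¹ * ∑ t : ZMod n, X t *
    Complex.exp (-(2 * Real.pi * Complex.I) * ((f * t).val : ℂ) / (n : ℂ))

/-- The `(n,B,G,σ,Δ)`-hashing of `X`:
`U_j = (B/n) ∑_{i ∈ [n/B]} X_{σ(Δ+j+B·i)} G_{j+B·i}` for `j ∈ [B]`. -/
noncomputable def hashing (n B : ℕ) [NeZero (n / B)] (X G : ZMod n → ℂ)
    (σ Δ : ZMod n) : ZMod B → ℂ :=
  fun j => (B : ℂ) / (n : ℂ) * ∑ i : ZMod (n / B),
    X (σ * (Δ + (j.val : ZMod n) + (B : ZMod n) * (i.val : ZMod n))) *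
      G ((j.val : ZMod n) + (B : ZMod n) * (i.val : ZMod n))

/-- The standard character `a ↦ exp(2πi a.val / n)`. -/
noncomputable def ee (n : ℕ) (a : ZMod n) : ℂ :=
  Complex.exp (2 * Real.pi * Complex.I * (a.val : ℂ) / (n : ℂ))

lemma ee_intCast (n : ℕ) [NeZero n] (k : ℤ) :
    ee n ((k : ZMod n)) = Complex.exp (2 * Real.pi * Complex.I * (k : ℂ) / (n : ℂ)) := by
  obtain ⟨q, hq⟩ : (n : ℤ) ∣ (((k : ZMod n).val : ℤ) - k) := by
    rw [← ZMod.intCast_zmod_eq_zero_iff_dvd]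
    push_cast
    simp [ZMod.natCast_val, ZMod.cast_id]
  have hval : (((k : ZMod n).val : ℂ)) = (k : ℂ) + (n : ℂ) * (q : ℂ) := by
    have h2 : (((k : ZMod n).val : ℤ)) = k + n * q := by linarith
    exact_mod_cast congrArg (Int.cast : ℤ → ℂ) h2
  have hn : (n : ℂ) ≠ 0 := Nat.cast_ne_zero.mpr (NeZero.ne n)
  unfold ee
  rw [hval, show 2 * (Real.pi : ℂ) * Complex.I * ((k : ℂ) + (n : ℂ) * (q : ℂ)) / (n : ℂ)
      = 2 * Real.pi * Complex.I * (k : ℂ) / (n : ℂ) + (q : ℂ) * (2 * Real.pi * Complex.I) by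
    field_simp]
  rw [Complex.exp_add, Complex.exp_int_mul_two_pi_mul_I, mul_one]

lemma self_eq_intCast_val (n : ℕ) [NeZero n] (a : ZMod n) : a = (((a.val : ℤ)) : ZMod n) := by
  push_cast
  simp [ZMod.natCast_zmod_val]

lemma ee_add (n : ℕ) [NeZero n] (a b : ZMod n) : ee n (a + b) = ee n a * ee n b := by
  rw [self_eq_intCast_val n a, self_eq_intCast_val n b, ← Int.cast_add, ee_intCast, ee_intCast,
    ee_intCast, ← Complex.exp_add]
  congr 1
  push_cast
  ring

lemma ee_neg_val (n : ℕ) [NeZero n] (x : ZMod n) :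
    Complex.exp (-(2 * Real.pi * Complex.I) * ((x.val : ℕ) : ℂ) / (n : ℂ)) = ee n (-x) := by
  rw [show -x = (((-(x.val : ℤ)) : ℤ) : ZMod n) by push_cast; simp [ZMod.natCast_zmod_val],
    ee_intCast]
  congr 1
  push_cast
  ring

lemma ee_zero (n : ℕ) [NeZero n] : ee n 0 = 1 := by
  simp [ee, ZMod.val_zero]

lemma ee_ne_one (n : ℕ) [NeZero n] {a : ZMod n} (ha : a ≠ 0) : ee n a ≠ 1 := by
  intro h
  have hn : (n : ℂ) ≠ 0 := Nat.cast_ne_zero.mpr (NeZero.ne n)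
  obtain ⟨k, hk⟩ := Complex.exp_eq_one_iff.mp h
  rw [mul_div_assoc] at hk
  have h1 : ((a.val : ℂ)) / (n : ℂ) = (k : ℂ) := by
    have h2pi : (2 * (Real.pi : ℂ) * Complex.I) ≠ 0 := by
      simpa [mul_comm] using Complex.two_pi_I_ne_zero
    have heq : 2 * (Real.pi : ℂ) * Complex.I * ((a.val : ℂ) / (n : ℂ))
        = 2 * (Real.pi : ℂ) * Complex.I * (k : ℂ) := by rw [hk]; ring
    exact mul_left_cancel₀ h2pi heq
  have h2 : ((a.val : ℂ)) = (k : ℂ) * (n : ℂ) := by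
    rw [div_eq_iff hn] at h1; exact h1
  have h3 : ((a.val : ℤ)) = k * n := by exact_mod_cast h2
  have h4 : (a.val : ℤ) < n := by exact_mod_cast ZMod.val_lt a
  have h5 : (0 : ℤ) ≤ (a.val : ℤ) := Int.natCast_nonneg _
  have hnpos : (0 : ℤ) < n := by exact_mod_cast Nat.pos_of_ne_zero (NeZero.ne n)
  have hk0 : k = 0 := by
    rcases lt_trichotomy k 0 with hc | hc | hc
    · nlinarith
    · exact hc
    · nlinarith
  have h6 : (a.val : ℤ) = 0 := by rw [hk0] at h3; simpa using h3
  have : a.val = 0 := by exact_mod_cast h6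
  exact ha ((ZMod.val_eq_zero a).mp this)

lemma ee_pow (n : ℕ) [NeZero n] (a : ZMod n) (k : ℕ) : ee n a ^ k = ee n ((k : ZMod n) * a) := by
  induction k with
  | zero => simp [ee_zero]
  | succ k ih =>
      rw [pow_succ, ih, ← ee_add]
      congr 1
      push_cast
      ring

lemma sum_val (n : ℕ) [NeZero n] (g : ℕ → ℂ) :
    ∑ f : ZMod n, g f.val = ∑ i ∈ Finset.range n, g i := by
  rw [← Fin.sum_univ_eq_sum_range]
  have hbij : Function.Bijective (fun f : ZMod n => (⟨f.val, ZMod.val_lt f⟩ : Fin n)) := by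
    rw [Fintype.bijective_iff_injective_and_card]
    constructor
    · intro x y hxy
      exact ZMod.val_injective n (congrArg Fin.val hxy)
    · simp [ZMod.card]
  exact Fintype.sum_bijective _ hbij _ _ (fun f => rfl)

lemma ee_sum (n : ℕ) [NeZero n] (a : ZMod n) :
    ∑ f : ZMod n, ee n (f * a) = if a = 0 then (n : ℂ) else 0 := by
  by_cases ha : a = 0
  · simp [ha, ee_zero, ZMod.card]
  · rw [if_neg ha]
    have h1 : ∀ f : ZMod n, ee n (f * a) = ee n a ^ f.val := by
      intro f
      rw [ee_pow]
      congr 1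
      rw [ZMod.natCast_zmod_val]
    rw [Finset.sum_congr rfl fun f _ => h1 f, sum_val n (fun i => ee n a ^ i),
      geom_sum_eq (ee_ne_one n ha)]
    have : ee n a ^ n = 1 := by
      rw [ee_pow]
      simp [ZMod.natCast_self, ee_zero]
    rw [this]
    simp

lemma dft_eq_sum_ee (n : ℕ) [NeZero n] (X : ZMod n → ℂ) (f : ZMod n) :
    dft n X f = (n : ℂ)⁻¹ * ∑ t : ZMod n, X t * ee n (-(f * t)) := by
  unfold dft
  congr 1
  exact Finset.sum_congr rfl fun t _ => by rw [ee_neg_val]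

lemma idft (n : ℕ) [NeZero n] (X : ZMod n → ℂ) (w : ZMod n) :
    ∑ f : ZMod n, dft n X f * ee n (f * w) = X w := by
  have hn : (n : ℂ) ≠ 0 := Nat.cast_ne_zero.mpr (NeZero.ne n)
  have step1 : ∀ f : ZMod n, dft n X f * ee n (f * w)
      = (n : ℂ)⁻¹ * ∑ t : ZMod n, X t * ee n (f * (w - t)) := by
    intro f
    rw [dft_eq_sum_ee, mul_assoc, Finset.sum_mul]
    congr 1
    refine Finset.sum_congr rfl fun t _ => ?_
    rw [mul_assoc, ← ee_add]
    congr 2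
    ring
  rw [Finset.sum_congr rfl fun f _ => step1 f, ← Finset.mul_sum, Finset.sum_comm]
  have step2 : ∀ t : ZMod n, ∑ f : ZMod n, X t * ee n (f * (w - t))
      = X t * (if w - t = 0 then (n : ℂ) else 0) := by
    intro t
    rw [← Finset.mul_sum, ee_sum]
  rw [Finset.sum_congr rfl fun t _ => step2 t]
  have step3 : ∑ t : ZMod n, X t * (if w - t = 0 then (n : ℂ) else 0)
      = X w * n := by
    rw [Finset.sum_congr rfl (g := fun t => if w = t then X t * n else 0)
      (fun t _ => by rw [mul_ite, mul_zero]; congr 1; rw [eq_comm, sub_eq_zero]),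
      Finset.sum_ite_eq]
    simp
  rw [step3]
  field_simp

lemma dft_even (n : ℕ) [NeZero n] (G : ZMod n → ℂ) (hG : ∀ t : ZMod n, G (-t) = G t)
    (g : ZMod n) : dft n G (-g) = dft n G g := by
  unfold dft
  congr 1
  exact Fintype.sum_equiv (Equiv.neg (ZMod n)) _ _ fun t => by
    simp only [Equiv.neg_apply, hG]
    congr 2
    ring

lemma mdiv_mul (n B m : ℕ) [NeZero n] (hnm : n = B * m) {u v : ℤ}
    (h : (u : ZMod B) = (v : ZMod B)) :
    (m : ZMod n) * ((u : ℤ) : ZMod n) = (m : ZMod n) * ((v : ℤ) : ZMod n) := by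
  obtain ⟨q, hq⟩ : (B : ℤ) ∣ u - v := by
    rwa [← ZMod.intCast_zmod_eq_zero_iff_dvd, Int.cast_sub, sub_eq_zero]
  have hkey : (((m : ℤ) * (u - v) : ℤ) : ZMod n) = 0 := by
    rw [hq, show (m : ℤ) * ((B : ℤ) * q) = (n : ℤ) * q by rw [hnm]; push_cast; ring]
    push_cast
    simp [ZMod.natCast_self]
  push_cast at hkey
  linear_combination hkey

lemma ee_lift (n B m : ℕ) [NeZero n] [NeZero B] (hnm : n = B * m) (x : ZMod B) :
    ee B x = ee n ((m : ZMod n) * ((x.val : ℕ) : ZMod n)) := by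
  have hB0 : (B : ℂ) ≠ 0 := Nat.cast_ne_zero.mpr (NeZero.ne B)
  have hn0 : (n : ℂ) ≠ 0 := Nat.cast_ne_zero.mpr (NeZero.ne n)
  have h1 : (((m : ℕ) * x.val : ℤ) : ZMod n)
      = (m : ZMod n) * ((x.val : ℕ) : ZMod n) := by push_cast; ring
  rw [← h1, ee_intCast]
  unfold ee
  congr 1
  have hnc : (n : ℂ) = (B : ℂ) * (m : ℂ) := by exact_mod_cast congrArg (Nat.cast : ℕ → ℂ) hnm
  have hm0 : (m : ℂ) ≠ 0 := by
    intro h0; rw [h0, mul_zero] at hnc; exact hn0 hnc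
  rw [hnc]
  push_cast
  field_simp

lemma phi_bijective (n B m : ℕ) [NeZero n] [NeZero B] [NeZero m] (hnm : n = B * m) :
    Function.Bijective (fun p : ZMod B × ZMod m => ((p.1.val + B * p.2.val : ℕ) : ZMod n)) := by
  have hBpos : 0 < B := Nat.pos_of_ne_zero (NeZero.ne B)
  have hlt : ∀ r : ZMod B × ZMod m, r.1.val + B * r.2.val < n := by
    intro r
    have h1 := ZMod.val_lt r.1
    have h2 := ZMod.val_lt r.2
    have h3 : B * (r.2.val + 1) ≤ B * m := Nat.mul_le_mul_left _ (Nat.succ_le_of_lt h2)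
    rw [Nat.mul_add, Nat.mul_one] at h3
    omega
  rw [Fintype.bijective_iff_injective_and_card]
  constructor
  · intro p q h
    have hp := ZMod.val_cast_of_lt (hlt p)
    have hq := ZMod.val_cast_of_lt (hlt q)
    have heq : p.1.val + B * p.2.val = q.1.val + B * q.2.val := by
      simpa only [hp, hq] using congrArg ZMod.val h
    have h1 : p.1.val = q.1.val := by
      have := congrArg (· % B) heq
      simpa [Nat.add_mul_mod_self_left, Nat.mod_eq_of_lt (ZMod.val_lt p.1),
        Nat.mod_eq_of_lt (ZMod.val_lt q.1)] using this
    have h2 : p.2.val = q.2.val := by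
      rw [h1] at heq
      have := Nat.add_left_cancel heq
      exact Nat.eq_of_mul_eq_mul_left hBpos this
    exact Prod.ext (ZMod.val_injective B h1) (ZMod.val_injective m h2)
  · simp [ZMod.card, hnm]

theorem stepA (n B : ℕ) [NeZero n] [NeZero B] [NeZero (n / B)] (hBn : B ∣ n)
    (X G : ZMod n → ℂ) (σ Δ : ZMod n) (b : ZMod B) :
    dft B (hashing n B X G σ Δ) b
      = (n : ℂ)⁻¹ * ∑ t : ZMod n, X (σ * (Δ + t)) * G t *
          ee n (-(((n / B : ℕ) : ZMod n) * ((b.val : ℕ) : ZMod n) * t)) := by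
  have hnm : n = B * (n / B) := (Nat.mul_div_cancel' hBn).symm
  have hB0 : (B : ℂ) ≠ 0 := Nat.cast_ne_zero.mpr (NeZero.ne B)
  have hn0 : (n : ℂ) ≠ 0 := Nat.cast_ne_zero.mpr (NeZero.ne n)
  set c : ZMod n := ((n / B : ℕ) : ZMod n) * ((b.val : ℕ) : ZMod n) with hc
  have hBm0 : ((n / B : ℕ) : ZMod n) * ((B : ℕ) : ZMod n) = 0 := by
    rw [← Nat.cast_mul, Nat.mul_comm, ← hnm, ZMod.natCast_self]
  -- character computation for each (j, i)
  have hchar : ∀ (j : ZMod B) (i : ZMod (n / B)),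
      Complex.exp (-(2 * Real.pi * Complex.I) * (((b * j).val : ℕ) : ℂ) / (B : ℂ))
        = ee n (-(c * ((j.val : ZMod n) + (B : ZMod n) * (i.val : ZMod n)))) := by
    intro j i
    rw [ee_neg_val B (b * j), ee_lift n B (n / B) hnm]
    have h1 : (((((-(b * j)).val : ℕ) : ℤ)) : ZMod B) = (((-((b.val : ℤ) * (j.val : ℤ)) : ℤ)) : ZMod B) := by
      push_cast
      simp [ZMod.natCast_zmod_val]
    have h2 := mdiv_mul n B (n / B) hnm h1
    rw [show (((-(b * j)).val : ℕ) : ZMod n) = ((((((-(b * j)).val : ℕ) : ℤ)) : ℤ) : ZMod n) by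
      push_cast; ring, h2]
    congr 1
    have h3 : ((-((b.val : ℤ) * (j.val : ℤ)) : ℤ) : ZMod n)
        = -(((b.val : ℕ) : ZMod n) * ((j.val : ℕ) : ZMod n)) := by push_cast; ring
    rw [h3]
    linear_combination (((b.val : ℕ) : ZMod n) * ((i.val : ZMod n))) * hBm0
  -- expand and reindex
  rw [dft]
  simp only [hashing]
  rw [Finset.mul_sum]
  have hterm : ∀ j : ZMod B,
      (B : ℂ)⁻¹ * (((B : ℂ) / (n : ℂ) * ∑ i : ZMod (n / B),
          X (σ * (Δ + (j.val : ZMod n) + (B : ZMod n) * (i.val : ZMod n))) *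
            G ((j.val : ZMod n) + (B : ZMod n) * (i.val : ZMod n))) *
        Complex.exp (-(2 * Real.pi * Complex.I) * (((b * j).val : ℕ) : ℂ) / (B : ℂ)))
      = ∑ i : ZMod (n / B), (n : ℂ)⁻¹ *
          (X (σ * (Δ + ((j.val : ZMod n) + (B : ZMod n) * (i.val : ZMod n)))) *
            G ((j.val : ZMod n) + (B : ZMod n) * (i.val : ZMod n)) *
            ee n (-(c * ((j.val : ZMod n) + (B : ZMod n) * (i.val : ZMod n))))) := by
    intro j
    rw [mul_comm ((B : ℂ) / (n : ℂ)) _, mul_assoc, Finset.sum_mul, Finset.mul_sum]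
    refine Finset.sum_congr rfl fun i _ => ?_
    rw [hchar j i]
    rw [show σ * (Δ + (j.val : ZMod n) + (B : ZMod n) * (i.val : ZMod n))
        = σ * (Δ + ((j.val : ZMod n) + (B : ZMod n) * (i.val : ZMod n))) by ring]
    field_simp
  rw [Finset.sum_congr rfl fun j _ => hterm j, ← Finset.sum_product',
    Finset.univ_product_univ, Finset.mul_sum]
  have hbij := phi_bijective n B (n / B) hnm
  refine Fintype.sum_bijective _ hbij _ _ fun p => ?_
  have hcast : ((p.1.val + B * p.2.val : ℕ) : ZMod n)
      = (p.1.val : ZMod n) + (B : ZMod n) * (p.2.val : ZMod n) := by push_cast; ring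
  rw [hcast]

/-- Fourier transform of a hashed signal: for `G` symmetric about zero,
`Û_b = ∑_{f ∈ [n]} X̂_f Ĝ_{σf − b·(n/B)} ω_n^{σΔf}`. -/
theorem dft_hashing (n B : ℕ) [NeZero n] [NeZero B] [NeZero (n / B)]
    (hn : ∃ k, n = 2 ^ k) (hB : ∃ k, B = 2 ^ k) (hBn : B ∣ n)
    (X G : ZMod n → ℂ) (hGsymm : ∀ t : ZMod n, G (-t) = G t)
    (σ Δ : ZMod n) (hσ : σ.val % 2 = 1) (b : ZMod B) :
    dft B (hashing n B X G σ Δ) b =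
      ∑ f : ZMod n,
        dft n X f * dft n G (σ * f - ((n / B : ℕ) : ZMod n) * (b.val : ZMod n)) *
          Complex.exp (2 * Real.pi * Complex.I * ((σ * Δ * f).val : ℂ) / (n : ℂ)) := by
  set c : ZMod n := ((n / B : ℕ) : ZMod n) * ((b.val : ℕ) : ZMod n) with hc
  rw [stepA n B hBn X G σ Δ b]
  have key : ∀ t : ZMod n, X (σ * (Δ + t)) * G t * ee n (-(c * t))
      = ∑ f : ZMod n, dft n X f * ee n (σ * Δ * f) * (G t * ee n (-((c - σ * f) * t))) := by
    intro t
    rw [← idft n X (σ * (Δ + t)), Finset.sum_mul, Finset.sum_mul]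
    refine Finset.sum_congr rfl fun f _ => ?_
    have hsplit : ee n (f * (σ * (Δ + t))) * ee n (-(c * t))
        = ee n (σ * Δ * f) * ee n (-((c - σ * f) * t)) := by
      rw [← ee_add, ← ee_add]
      congr 1
      ring
    linear_combination (dft n X f * G t) * hsplit
  rw [Finset.sum_congr rfl fun t _ => key t, Finset.sum_comm, Finset.mul_sum]
  refine Finset.sum_congr rfl fun f _ => ?_
  have hG : (n : ℂ)⁻¹ * ∑ t : ZMod n, G t * ee n (-((c - σ * f) * t))
      = dft n G (σ * f - c) := by
    rw [← dft_eq_sum_ee, show σ * f - c = -(c - σ * f) by ring, dft_even n G hGsymm]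
  calc (n : ℂ)⁻¹ * ∑ t : ZMod n, dft n X f * ee n (σ * Δ * f) * (G t * ee n (-((c - σ * f) * t)))
      = dft n X f * ee n (σ * Δ * f) * ((n : ℂ)⁻¹ * ∑ t : ZMod n, G t * ee n (-((c - σ * f) * t))) := by
        rw [← Finset.mul_sum]; ring
    _ = dft n X f * dft n G (σ * f - c) * ee n (σ * Δ * f) := by rw [hG]; ring
    _ = _ := by rw [ee]
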